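/- Let F be a stack on K and W = ⟨∅ = K_0, …, K_k = K⟩ an F-sequence. Then W is a flooding sequence if and only if, for each i ∈ [0, k], K_i is a subcomplex for F (i.e., for all σ ∈ K, τ ∈ K_i, if F(σ) < F(τ) then σ ∈ K_i). -/
import Mathlib


open Finset

abbrev Simplex : Type := Finset ℕ
abbrev Cplx : Type := Finset (Finset ℕ)

/-- A simplicial complex: a finite set of nonempty finite sets closed under
taking nonempty subsets. -/
def IsSimpComplex (K : Cplx) : Prop :=
  (∀ τ ∈ K, τ.Nonempty) ∧ ∀ τ ∈ K, ∀ σ : Simplex, σ ⊆ τ → σ.Nonempty → σ ∈ K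

/-- A cosimplicial complex: for all σ, τ ∈ S, every ν with σ ⊆ ν ⊆ τ is in S. -/
def IsCosimplicial (S : Cplx) : Prop :=
  ∀ σ ∈ S, ∀ τ ∈ S, ∀ ν : Simplex, σ ⊆ ν → ν ⊆ τ → ν ∈ S

/-- S is open for K. -/
def IsOpenFor (K S : Cplx) : Prop :=
  S ⊆ K ∧ ∀ σ ∈ S, ∀ τ ∈ K, σ ⊆ τ → τ ∈ S

/-- S is closed for K. -/
def IsClosedFor (K S : Cplx) : Prop :=
  S ⊆ K ∧ IsSimpComplex S

/-- Closure of a finite set of simplexes: all nonempty subsets of members. -/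
def cl (S : Cplx) : Cplx :=
  S.biUnion fun τ => τ.powerset.filter fun σ => σ.Nonempty

/-- (σ, τ) is a free pair for K: τ is the only face of K properly containing σ. -/
def IsFreePair (K : Cplx) (σ τ : Simplex) : Prop :=
  σ ∈ K ∧ τ ∈ K ∧ σ ⊂ τ ∧ ∀ ρ ∈ K, σ ⊂ ρ → ρ = τ

/-- K' is an elementary expansion of K. -/
def ElemExpansion (K' K : Cplx) : Prop :=
  ∃ σ τ : Simplex, σ ∉ K ∧ τ ∉ K ∧ K' = K ∪ {σ, τ} ∧ IsFreePair K' σ τ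

/-- K' is an elementary filling of K: K' = K ∪ {ν} with ν a facet of K'. -/
def ElemFilling (K' K : Cplx) : Prop :=
  ∃ ν : Simplex, ν ∉ K ∧ K' = insert ν K ∧ ∀ ρ ∈ K', ν ⊆ ρ → ρ = ν

/-- A collapses onto B: a sequence of elementary collapses from A to B. -/
def Collapses (A B : Cplx) : Prop :=
  Relation.ReflTransGen (fun X Y : Cplx => ElemExpansion X Y) A B

/-- A Morse sequence from L to K, as W 0, …, W k, consisting of simplicial
complexes, each step an elementary expansion or an elementary filling. -/
def MorseSeq (L K : Cplx) (k : ℕ) (W : ℕ → Cplx) : Prop :=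
  W 0 = L ∧ W k = K ∧ (∀ i ≤ k, IsSimpComplex (W i)) ∧
  ∀ i < k, ElemExpansion (W (i+1)) (W i) ∨ ElemFilling (W (i+1)) (W i)

/-- F is a stack on S: monotone with respect to inclusion. -/
def IsStackOn (S : Cplx) (F : Simplex → ℤ) : Prop :=
  ∀ σ ∈ S, ∀ τ ∈ S, σ ⊆ τ → F σ ≤ F τ

/-- (σ, τ) is a regular pair of the Morse sequence W (of length k). -/
def RegularPair (k : ℕ) (W : ℕ → Cplx) (σ τ : Simplex) : Prop :=
  ∃ i < k, σ ∉ W i ∧ τ ∉ W i ∧ W (i+1) = W i ∪ {σ, τ} ∧ IsFreePair (W (i+1)) σ τ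

/-- An F-sequence: a Morse sequence whose regular pairs satisfy F σ = F τ. -/
def FSeq (F : Simplex → ℤ) (L K : Cplx) (k : ℕ) (W : ℕ → Cplx) : Prop :=
  MorseSeq L K k W ∧ ∀ σ τ : Simplex, RegularPair k W σ τ → F σ = F τ

/-- A flooding sequence: an F-sequence from ∅ to K such that F σ ≤ F τ whenever
σ ∈ K_i and τ ∈ K_j appears strictly later (τ ∉ K_i), with i < j. -/
def Flooding (F : Simplex → ℤ) (K : Cplx) (k : ℕ) (W : ℕ → Cplx) : Prop :=
  FSeq F ∅ K k W ∧
  ∀ i j : ℕ, i < j → j ≤ k → ∀ σ ∈ W i, ∀ τ ∈ W j, τ ∉ W i → F σ ≤ F τ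

/-- Coboundary δ(ν, S) of ν in S. -/
def cob (S : Cplx) (ν : Simplex) : Cplx :=
  S.filter fun μ => ν ⊆ μ ∧ μ.card = ν.card + 1

/-- Boundary ∂(ν, S) of ν in S. -/
def bdry (S : Cplx) (ν : Simplex) : Cplx :=
  S.filter fun η => η ⊆ ν ∧ η.card + 1 = ν.card

theorem flooding_iff_subcomplexes_for_F (K : Cplx) (F : Simplex → ℤ)
    (k : ℕ) (W : ℕ → Cplx)
    (hK : IsSimpComplex K) (hF : IsStackOn K F) (hW : FSeq F ∅ K k W) :
    Flooding F K k W ↔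
      ∀ i ≤ k, ∀ σ ∈ K, ∀ τ ∈ W i, F σ < F τ → σ ∈ W i := by
  obtain ⟨⟨h0, hk, hsc, hstep⟩, hreg⟩ := hW
  have mono : ∀ i j, i ≤ j → j ≤ k → W i ⊆ W j := by
    intro i j hij hjk
    induction j with
    | zero =>
      have : i = 0 := Nat.le_zero.mp hij
      subst this; exact subset_rfl
    | succ n ih =>
      rcases Nat.lt_or_ge i (n+1) with h | h
      · have h1 : W n ⊆ W (n+1) := by
          rcases hstep n (by omega) with ⟨σ, τ, _, _, heq, _⟩ | ⟨ν, _, heq, _⟩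
          · rw [heq]; exact Finset.subset_union_left
          · rw [heq]; exact Finset.subset_insert _ _
        exact (ih (by omega) (by omega)).trans h1
      · have : i = n+1 := le_antisymm hij h
        subst this; exact subset_rfl
  constructor
  · rintro ⟨_, hfl⟩ i hi σ hσ τ hτ hlt
    by_contra hσi
    have hσk : σ ∈ W k := hk ▸ hσ
    have hik : i < k := by
      rcases lt_or_eq_of_le hi with h | h
      · exact h
      · subst h; exact absurd hσk hσi
    have := hfl i k hik le_rfl τ hτ σ hσk hσi
    omega
  · intro h
    refine ⟨⟨⟨h0, hk, hsc, hstep⟩, hreg⟩, ?_⟩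
    intro i j hij hjk σ hσ τ hτ hτi
    by_contra hlt
    push_neg at hlt
    have hτK : τ ∈ K := hk ▸ (mono j k hjk le_rfl hτ)
    exact hτi (h i (by omega) τ hτK σ hσ hlt)
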